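/- The direct limit of the direct system of groups H_k = C_{p_k} ≀ ⋯ ≀ C_{p_1} (iterated wreath products of cyclic groups) under the natural injective homomorphisms H_k → H_{k+1} has commutator width 1. -/

import Mathlib

open scoped commutatorElement

/-- The cyclic shift action of `C_p = ZMod p` on the direct power `B^p`. -/
def cycShift (B : Type*) [Group B] (p : ℕ) :
    Multiplicative (ZMod p) →* MulAut (ZMod p → B) where
  toFun k := MulEquiv.arrowCongr (Equiv.addRight (Multiplicative.toAdd k)) (MulEquiv.refl B)
  map_one' := by
    ext f i
    simp [MulEquiv.arrowCongr]
    rfl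
  map_mul' a b := by
    ext f i
    simp only [MulEquiv.arrowCongr, Equiv.coe_addRight, MulEquiv.coe_mk, Equiv.coe_fn_mk,
      MulEquiv.refl_apply, toAdd_mul, MulAut.mul_apply]
    congr 1
    simp only [Equiv.addRight_symm, Equiv.coe_addRight]
    abel

/-- The permutational wreath product `B ≀ C_p` with `C_p` acting on `p` points by cyclic shift. -/
abbrev Wr (B : Type*) [Group B] (p : ℕ) : Type _ :=
  (ZMod p → B) ⋊[cycShift B p] Multiplicative (ZMod p)

lemma cycShift_apply {B : Type*} [Group B] {p : ℕ} (t : Multiplicative (ZMod p))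
    (f : ZMod p → B) (i : ZMod p) :
    cycShift B p t f i = f (i - Multiplicative.toAdd t) := by
  simp [cycShift, MulEquiv.arrowCongr, sub_eq_add_neg]

lemma cycShift_inv_apply {B : Type*} [Group B] {p : ℕ} (t : Multiplicative (ZMod p))
    (f : ZMod p → B) (i : ZMod p) :
    (cycShift B p t)⁻¹ f i = f (i + Multiplicative.toAdd t) := by
  rw [← map_inv, cycShift_apply]
  simp [sub_neg_eq_add]

def sumHom (B : Type*) [Group B] (p : ℕ) [NeZero p] : Wr B p →* Abelianization B where
  toFun w := ∏ i : ZMod p, Abelianization.of (w.left i)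
  map_one' := by simp
  map_mul' a b := by
    have h : ∀ i, ((a * b).left i) = a.left i * b.left (i - Multiplicative.toAdd a.right) := by
      intro i
      rw [SemidirectProduct.mul_left]
      simp [cycShift_apply]
    simp only [h, map_mul]
    rw [Finset.prod_mul_distrib]
    congr 1
    exact Equiv.prod_comp (Equiv.subRight (Multiplicative.toAdd a.right))
      (fun i => Abelianization.of (b.left i))

lemma mem_commutator_of_abelianization_eq_one {G : Type*} [Group G] {x : G}
    (h : Abelianization.of x = 1) : x ∈ commutator G :=
  (QuotientGroup.eq_one_iff x).mp h

lemma map_mem_commutator {G H : Type*} [Group G] [Group H] (φ : G →* H) {x : G}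
    (hx : x ∈ commutator G) : φ x ∈ commutator H := by
  rw [commutator_eq_closure] at hx
  induction hx using Subgroup.closure_induction with
  | mem y hy =>
    obtain ⟨a, b, rfl⟩ := hy
    rw [map_commutatorElement]
    exact Subgroup.commutator_mem_commutator (Subgroup.mem_top _) (Subgroup.mem_top _)
  | one => rw [map_one]; exact one_mem _
  | mul x y hx hy ihx ihy => rw [map_mul]; exact mul_mem ihx ihy
  | inv x hx ihx => rw [map_inv]; exact inv_mem ihx

def descProd {B : Type*} [Group B] {p : ℕ} (f : ZMod p → B) : ℕ → B
  | 0 => 1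
  | r + 1 => f ((r + 1 : ℕ) : ZMod p) * descProd f r

lemma of_descProd {B : Type*} [Group B] {p : ℕ} (f : ZMod p → B) (r : ℕ) :
    Abelianization.of (descProd f r)
      = ∏ j ∈ Finset.range r, Abelianization.of (f ((j + 1 : ℕ) : ZMod p)) := by
  induction r with
  | zero => simp [descProd]
  | succ r ih =>
    rw [descProd, map_mul, ih, Finset.prod_range_succ, mul_comm]

lemma wr_step {B : Type*} [Group B] {p : ℕ} (hp : 2 ≤ p)
    (IH : ∀ y ∈ commutator B, ∃ u v : B, y = ⁅u, v⁆)
    {x : Wr B p} (hx : x ∈ commutator (Wr B p)) :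
    ∃ a b : Wr B p, x = ⁅a, b⁆ := by
  haveI : NeZero p := ⟨by omega⟩
  haveI : Fact (1 < p) := ⟨by omega⟩
  obtain ⟨f, t⟩ := x
  have ht : t = 1 := by
    have h1 := Abelianization.commutator_subset_ker
      (SemidirectProduct.rightHom : Wr B p →* Multiplicative (ZMod p)) hx
    simpa [MonoidHom.mem_ker, SemidirectProduct.rightHom] using h1
  subst ht
  have hψ : (∏ i : ZMod p, Abelianization.of (f i)) = 1 := by
    have h1 := Abelianization.commutator_subset_ker (sumHom B p) hx
    simpa [MonoidHom.mem_ker, sumHom] using h1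
  have hre : (∏ i : ZMod p, Abelianization.of (f i))
      = ∏ j ∈ Finset.range p, Abelianization.of (f (j : ZMod p)) := by
    refine Finset.prod_nbij' (fun i => ZMod.val i) (fun j => (j : ZMod p)) ?_ ?_ ?_ ?_ ?_
    · intro a _; exact Finset.mem_range.mpr a.val_lt
    · intro a _; exact Finset.mem_univ _
    · intro a _; exact ZMod.natCast_rightInverse a
    · intro a ha; exact ZMod.val_cast_of_lt (Finset.mem_range.mp ha)
    · intro a _; rw [ZMod.natCast_rightInverse a]
  have hsplit : (∏ j ∈ Finset.range p, Abelianization.of (f (j : ZMod p)))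
      = Abelianization.of (f 0 * descProd f (p - 1)) := by
    have hrange : Finset.range p = Finset.range ((p - 1) + 1) := by congr 1; omega
    rw [hrange, Finset.prod_range_succ', map_mul, of_descProd, mul_comm, Nat.cast_zero]
  have hQ : f 0 * descProd f (p - 1) ∈ commutator B :=
    mem_commutator_of_abelianization_eq_one (by rw [← hsplit, ← hre, hψ])
  obtain ⟨u, v, huv⟩ := IH _ hQ
  rw [commutatorElement_def] at huv
  set gf : ZMod p → B := fun i => if i = 0 then u else descProd f i.val * (v * u * v⁻¹) with hgf
  set hf : ZMod p → B := fun i => if i = 1 then v else 1 with hhf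
  refine ⟨⟨gf, 1⟩, ⟨hf, Multiplicative.ofAdd (1 : ZMod p)⟩, ?_⟩
  ext i
  case left =>
    simp only [commutatorElement_def, SemidirectProduct.mul_left, SemidirectProduct.mul_right,
      SemidirectProduct.inv_left, SemidirectProduct.inv_right, map_one, map_inv, mul_one,
      one_mul, inv_one, MulAut.one_apply, Pi.mul_apply, Pi.inv_apply]
    simp only [cycShift_apply, cycShift_inv_apply, toAdd_ofAdd, toAdd_inv, Pi.inv_apply,
      sub_neg_eq_add, sub_add_cancel]
    have hone : (1 : ZMod p) ≠ 0 := one_ne_zero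
    by_cases hi0 : i = 0
    · subst hi0
      have hcast : ((p - 1 : ℕ) : ZMod p) = 0 - 1 := by
        have hps : (1 : ℕ) ≤ p := by omega
        rw [Nat.cast_sub hps, ZMod.natCast_self, Nat.cast_one]
      have hne : (0 : ZMod p) - 1 ≠ 0 := by
        rw [zero_sub, neg_ne_zero]; exact hone
      have hval : ((0 : ZMod p) - 1).val = p - 1 := by
        rw [← hcast, ZMod.val_cast_of_lt (by omega)]
      simp only [hgf, hhf, if_pos rfl, if_neg hne, if_neg (Ne.symm hone), hval, inv_one, mul_one]
      rw [mul_inv_rev, mul_inv_rev, mul_inv_rev]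
      have : f 0 = (u * v * u⁻¹ * v⁻¹) * (descProd f (p - 1))⁻¹ := by
        rw [← huv]; group
      rw [this]; group
    · by_cases hi1 : i = 1
      · subst hi1
        have hsub : (1 : ZMod p) - 1 = 0 := sub_self 1
        have hval1 : (1 : ZMod p).val = 1 := ZMod.val_one p
        have hd1 : descProd f 1 = f 1 := by
          show f ((0 + 1 : ℕ) : ZMod p) * 1 = f 1
          norm_num
        simp only [hgf, hhf, hsub, hval1, hd1, if_neg hi0]
        simp only [reduceIte]
        group
      · -- generic case: i.val ≥ 2
        have hr0 : i.val ≠ 0 := fun h => hi0 ((ZMod.val_eq_zero i).mp h)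
        have hival : ((i.val : ℕ) : ZMod p) = i := ZMod.natCast_rightInverse i
        have hr1 : i.val ≠ 1 := by
          intro h
          apply hi1
          rw [← hival, h, Nat.cast_one]
        have hcast : ((i.val - 1 : ℕ) : ZMod p) = i - 1 := by
          rw [Nat.cast_sub (by omega), hival, Nat.cast_one]
        have hvalm : (i - 1).val = i.val - 1 := by
          rw [← hcast, ZMod.val_cast_of_lt (by have := i.val_lt; omega)]
        have hne : i - 1 ≠ 0 := by
          intro h
          have : (i - 1).val = 0 := by rw [h, ZMod.val_zero]
          omega
        simp only [hgf, hhf, if_neg hi0, if_neg hi1, if_neg hne, hvalm, inv_one, mul_one]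
        have hdesc : descProd f i.val = f i * descProd f (i.val - 1) := by
          obtain ⟨r, hr⟩ : ∃ r, i.val = r + 1 := ⟨i.val - 1, by omega⟩
          rw [hr]
          show f ((r + 1 : ℕ) : ZMod p) * descProd f r = f i * descProd f (r + 1 - 1)
          rw [Nat.add_sub_cancel, ← hr, hival]
        rw [hdesc]; group
  case right =>
    simp [commutatorElement_def, SemidirectProduct.mul_right]

/-- Functoriality of the wreath product `- ≀ C_p` in the passive group. -/
def wrMap {B B' : Type*} [Group B] [Group B'] (φ : B →* B') (p : ℕ) :
    Wr B p →* Wr B' p :=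
  SemidirectProduct.map (φ.compLeft (ZMod p)) (MonoidHom.id _)
    (by
      intro g
      ext f i
      rfl)

/-- `HHgrp p i n` is the iterated wreath product
`C_{p (i+n)} ≀ ⋯ ≀ C_{p (i+1)} ≀ C_{p i}` (with `C_{p i}` the top active group),
so `HHgrp p 1 (k-1)` is the paper's `H_k = C_{p_k} ≀ ⋯ ≀ C_{p_1}`. -/
def HHgrp (p : ℕ → ℕ) : ℕ → ℕ → GrpCat
  | i, 0 => GrpCat.of (Multiplicative (ZMod (p i)))
  | i, n + 1 => GrpCat.of (Wr (HHgrp p (i + 1) n) (p i))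

/-- The natural injective homomorphism `H_k → H_{k+1}`, `g ↦ g(e, …, e)`: it is the
identity on the already-present wreath factors and at the bottom includes
`C_{p(i+n)}` as the active group of `C_{p(i+n+1)} ≀ C_{p(i+n)}` with trivial states. -/
def HHmap (p : ℕ → ℕ) : (i n : ℕ) → (HHgrp p i n →* HHgrp p i (n + 1))
  | _, 0 => SemidirectProduct.inr
  | i, n + 1 => wrMap (HHmap p (i + 1) n) (p i)

open scoped commutatorElement

lemma HHgrp_width (p : ℕ → ℕ) (hp : ∀ i, 2 ≤ p i) :
    ∀ n i, ∀ x ∈ commutator (HHgrp p i n), ∃ a b : HHgrp p i n, x = ⁅a, b⁆ := by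
  intro n
  induction n with
  | zero =>
    intro i x hx
    refine ⟨1, 1, ?_⟩
    have hx' : x ∈ commutator (Multiplicative (ZMod (p i))) := hx
    have h2 := Abelianization.commutator_subset_ker
      (MonoidHom.id (Multiplicative (ZMod (p i)))) hx'
    have h3 : x ∈ (⊥ : Subgroup (Multiplicative (ZMod (p i)))) := by
      have h4 := h2; simp only [MonoidHom.ker_id] at h4; exact h4
    rw [commutatorElement_one_left]; exact Subgroup.mem_bot.mp h3
  | succ n ih =>
    intro i x hx
    exact wr_step (hp i) (fun y hy => ih (i + 1) y hy) hx

lemma wr_nontriv {B : Type*} [Group B] {p : ℕ} (hp : 2 ≤ p) {τ : B} (hτ : τ ≠ 1) :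
    ∃ a b : Wr B p, ⁅a, b⁆ ≠ 1 := by
  haveI : NeZero p := ⟨by omega⟩
  haveI : Fact (1 < p) := ⟨by omega⟩
  set fδ : ZMod p → B := fun i => if i = 0 then τ else 1 with hfδ
  refine ⟨SemidirectProduct.inl fδ,
    SemidirectProduct.inr (Multiplicative.ofAdd (1 : ZMod p)), fun h => ?_⟩
  have hL := congrArg SemidirectProduct.left h
  rw [commutatorElement_def] at hL
  simp only [SemidirectProduct.mul_left, SemidirectProduct.mul_right,
    SemidirectProduct.inv_left, SemidirectProduct.inv_right, SemidirectProduct.left_inl,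
    SemidirectProduct.right_inl, SemidirectProduct.left_inr, SemidirectProduct.right_inr,
    map_one, mul_one, one_mul, inv_one, MulAut.one_apply, Pi.mul_apply, Pi.inv_apply] at hL
  have hL0 := congrFun hL 0
  have hne : (0 : ZMod p) - 1 ≠ 0 := by
    rw [zero_sub, neg_ne_zero]; exact one_ne_zero
  simp only [SemidirectProduct.one_left, Pi.mul_apply, Pi.inv_apply, Pi.one_apply,
    cycShift_apply, cycShift_inv_apply, toAdd_ofAdd, toAdd_inv, sub_neg_eq_add,
    sub_add_cancel, hfδ, if_neg hne, zero_sub] at hL0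
  have hne1 : (-1 : ZMod p) ≠ 0 := by rwa [zero_sub] at hne
  rw [if_pos trivial, if_neg hne1, inv_one, mul_one] at hL0
  exact hτ hL0

def HHup (p : ℕ → ℕ) (k : ℕ) : (m : ℕ) → (HHgrp p 1 k →* HHgrp p 1 (k + m))
  | 0 => MonoidHom.id _
  | m + 1 => (HHmap p 1 (k + m)).comp (HHup p k m)

/-- the direct limit of the direct system
`H_1 → H_2 → ⋯` of iterated wreath products `H_k = C_{p_k} ≀ ⋯ ≀ C_{p_1}` of cyclic
groups (orders ≥ 2) under the natural injective homomorphisms `HHmap` has commutator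
width 1.  The direct limit is characterized as a group `L` together with compatible
injective homomorphisms `g k : H_{k+1} → L` whose images jointly exhaust `L`;
the conclusion states that every element of `L`'s commutator subgroup is a single
commutator, and the commutator subgroup is nontrivial. -/
theorem cw_direct_limit_iterWr_eq_one (p : ℕ → ℕ) (hp : ∀ i, 2 ≤ p i)
    (L : Type*) [Group L] (g : ∀ k : ℕ, HHgrp p 1 k →* L)
    (hinj : ∀ k, Function.Injective (g k))
    (hcompat : ∀ (k : ℕ) (x : HHgrp p 1 k), g (k + 1) (HHmap p 1 k x) = g k x)
    (hexhaust : ∀ y : L, ∃ (k : ℕ) (x : HHgrp p 1 k), g k x = y) :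
    (∀ w ∈ commutator L, ∃ a b : L, w = ⁅a, b⁆) ∧ commutator L ≠ ⊥ := by
  have gup : ∀ k m (x : HHgrp p 1 k), g (k + m) (HHup p k m x) = g k x := by
    intro k m
    induction m with
    | zero => intro x; rfl
    | succ m ih =>
      intro x
      have := hcompat (k + m) (HHup p k m x)
      calc g (k + (m + 1)) (HHup p k (m + 1) x)
          = g (k + m + 1) (HHmap p 1 (k + m) (HHup p k m x)) := rfl
        _ = g (k + m) (HHup p k m x) := hcompat _ _
        _ = g k x := ih x
  have liftK : ∀ k K, k ≤ K → ∀ x : HHgrp p 1 k,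
      ∃ y : HHgrp p 1 K, g K y = g k x ∧ (x ∈ commutator _ → y ∈ commutator _) := by
    intro k K hkK x
    obtain ⟨m, rfl⟩ : ∃ m, K = k + m := ⟨K - k, by omega⟩
    exact ⟨HHup p k m x, gup k m x, fun h => map_mem_commutator _ h⟩
  have main : ∀ w ∈ commutator L,
      ∃ (k : ℕ) (x : HHgrp p 1 k), x ∈ commutator (HHgrp p 1 k) ∧ g k x = w := by
    intro w hw
    rw [commutator_eq_closure] at hw
    induction hw using Subgroup.closure_induction with
    | mem y hy =>
      obtain ⟨a, b, rfl⟩ := hy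
      obtain ⟨k1, x1, rfl⟩ := hexhaust a
      obtain ⟨k2, x2, rfl⟩ := hexhaust b
      obtain ⟨y1, hy1, -⟩ := liftK k1 (max k1 k2) (le_max_left _ _) x1
      obtain ⟨y2, hy2, -⟩ := liftK k2 (max k1 k2) (le_max_right _ _) x2
      refine ⟨max k1 k2, ⁅y1, y2⁆,
        Subgroup.commutator_mem_commutator (Subgroup.mem_top _) (Subgroup.mem_top _), ?_⟩
      rw [map_commutatorElement, hy1, hy2]
    | one => exact ⟨0, 1, one_mem _, map_one _⟩
    | mul w1 w2 hw1 hw2 ih1 ih2 =>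
      obtain ⟨k1, x1, hc1, rfl⟩ := ih1
      obtain ⟨k2, x2, hc2, rfl⟩ := ih2
      obtain ⟨y1, hy1, hcy1⟩ := liftK k1 (max k1 k2) (le_max_left _ _) x1
      obtain ⟨y2, hy2, hcy2⟩ := liftK k2 (max k1 k2) (le_max_right _ _) x2
      refine ⟨max k1 k2, y1 * y2, mul_mem (hcy1 hc1) (hcy2 hc2), ?_⟩
      rw [map_mul, hy1, hy2]
    | inv w1 hw1 ih1 =>
      obtain ⟨k1, x1, hc1, rfl⟩ := ih1
      exact ⟨k1, x1⁻¹, inv_mem hc1, map_inv _ _⟩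
  constructor
  · intro w hw
    obtain ⟨k, x, hxc, rfl⟩ := main w hw
    obtain ⟨a, b, rfl⟩ := HHgrp_width p hp k 1 x hxc
    exact ⟨g k a, g k b, by rw [map_commutatorElement]⟩
  · intro hbot
    haveI : Fact (1 < p 2) := ⟨by have := hp 2; omega⟩
    have hτ : (Multiplicative.ofAdd (1 : ZMod (p 2)) : Multiplicative (ZMod (p 2))) ≠ 1 := by
      intro h
      have : (1 : ZMod (p 2)) = 0 := by
        have := congrArg Multiplicative.toAdd h
        simpa using this
      exact one_ne_zero this
    obtain ⟨a, b, hab⟩ : ∃ a b : HHgrp p 1 1, ⁅a, b⁆ ≠ 1 := wr_nontriv (B := HHgrp p 2 0) (p := p 1) (hp 1) hτ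
    have hmem : (⁅g 1 a, g 1 b⁆ : L) ∈ commutator L :=
      Subgroup.commutator_mem_commutator (Subgroup.mem_top _) (Subgroup.mem_top _)
    rw [hbot, Subgroup.mem_bot, ← map_commutatorElement] at hmem
    exact hab (hinj 1 (by rw [hmem, map_one]))
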